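/- Let H and H̃ = H + εM be real symmetric n×n matrices, with descending eigenvalues λ_1 ≥ ... ≥ λ_n of H and corresponding unit eigenvectors u_k of H and ũ_k of H̃. Then sin∠(u_k, ũ_k) ≤ 2ε‖M‖_op / min(λ_{k-1} - λ_k, λ_k - λ_{k+1}), provided the denominator is positive (Davis–Kahan sin Θ bound, Yu–Wang–Samworth variant). -/

import Mathlib

open scoped RealInnerProductSpace


section aux
variable {n : ℕ}
local notation "E" => EuclideanSpace ℝ (Fin n)

def dkE (x : Fin n → ℝ) : EuclideanSpace ℝ (Fin n) := WithLp.toLp 2 x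

lemma dk_inner_mulVec (A : Matrix (Fin n) (Fin n) ℝ) (x y : E) :
    ⟪x, dkE (A.mulVec y)⟫ = ∑ i, ∑ j, A i j * x i * y j := by
  simp only [PiLp.inner_apply, RCLike.inner_apply, conj_trivial, dkE, Matrix.mulVec,
    dotProduct, PiLp.toLp_apply, Finset.mul_sum, Finset.sum_mul]
  exact Finset.sum_congr rfl fun i _ => Finset.sum_congr rfl fun j _ => by ring

lemma dk_mulVec_symm {A : Matrix (Fin n) (Fin n) ℝ} (hA : A.IsSymm) (x y : E) :
    ⟪x, dkE (A.mulVec y)⟫ = ⟪dkE (A.mulVec x), y⟫ := by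
  rw [real_inner_comm y (dkE (A.mulVec x)), dk_inner_mulVec, dk_inner_mulVec,
    Finset.sum_comm]
  exact Finset.sum_congr rfl fun i _ => Finset.sum_congr rfl fun j _ => by
    rw [← hA.apply i j]; ring

lemma dk_opnorm (P : Matrix (Fin n) (Fin n) ℝ) (x : E) :
    |⟪x, dkE (P.mulVec x)⟫| ≤ ‖LinearMap.toContinuousLinearMap (Matrix.toEuclideanLin P)‖ * ‖x‖ ^ 2 := by
  calc |⟪x, dkE (P.mulVec x)⟫| ≤ ‖x‖ * ‖dkE (P.mulVec x)‖ := abs_real_inner_le_norm _ _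
    _ ≤ ‖x‖ * (‖LinearMap.toContinuousLinearMap (Matrix.toEuclideanLin P)‖ * ‖x‖) := by
        apply mul_le_mul_of_nonneg_left _ (norm_nonneg x)
        exact (LinearMap.toContinuousLinearMap (Matrix.toEuclideanLin P)).le_opNorm x
    _ = _ := by ring

lemma dk_norm_mulVec_le (P : Matrix (Fin n) (Fin n) ℝ) (x : E) :
    ‖dkE (P.mulVec x)‖ ≤ ‖LinearMap.toContinuousLinearMap (Matrix.toEuclideanLin P)‖ * ‖x‖ :=
  (LinearMap.toContinuousLinearMap (Matrix.toEuclideanLin P)).le_opNorm x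
end aux

section quad
variable {n : ℕ} {v : Fin n → EuclideanSpace ℝ (Fin n)} (hv : Orthonormal ℝ v)
  {ι : Type} [Fintype ι] {e : ι → Fin n} (he : Function.Injective e)
include hv he

lemma dk_inner_sum (a b : ι → ℝ) :
    ⟪∑ i, a i • v (e i), ∑ i, b i • v (e i)⟫ = ∑ i, a i * b i := by
  classical
  have h := orthonormal_iff_ite.mp (hv.comp e he)
  simp only [Function.comp] at h
  rw [sum_inner]
  simp_rw [inner_sum, real_inner_smul_left, real_inner_smul_right, h, mul_ite, mul_one,
    mul_zero, Finset.sum_ite_eq, Finset.mem_univ, if_true]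

lemma dk_mulVec_sum {A : Matrix (Fin n) (Fin n) ℝ} {μ : Fin n → ℝ}
    (heig : ∀ i, A.mulVec (v i) = μ i • v i) (a : ι → ℝ) :
    dkE (A.mulVec (∑ i, a i • v (e i))) = ∑ i, (μ (e i) * a i) • v (e i) := by
  ext j
  simp [dkE, Matrix.mulVec_sum, Matrix.mulVec_smul, heig, Finset.sum_apply, smul_smul, mul_comm]

lemma dk_quad_eq {A : Matrix (Fin n) (Fin n) ℝ} {μ : Fin n → ℝ}
    (heig : ∀ i, A.mulVec (v i) = μ i • v i) (a : ι → ℝ) :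
    ⟪∑ i, a i • v (e i), dkE (A.mulVec (∑ i, a i • v (e i)))⟫ = ∑ i, μ (e i) * a i ^ 2 := by
  rw [dk_mulVec_sum hv he heig, dk_inner_sum hv he]
  exact Finset.sum_congr rfl fun i _ => by ring
end quad

section weyl
variable {n : ℕ}

lemma dk_finrank_span (v : Fin n → EuclideanSpace ℝ (Fin n)) (hv : Orthonormal ℝ v)
    (s : Finset (Fin n)) :
    Module.finrank ℝ (Submodule.span ℝ (Set.range fun i : ↥s => v i)) = s.card := by
  have := finrank_span_eq_card ((hv.comp (fun i : ↥s => (i : Fin n)) Subtype.val_injective).linearIndependent)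
  simp only [Function.comp_def] at this
  rw [this]
  exact Fintype.card_coe s

set_option maxHeartbeats 800000 in
lemma dk_weyl (A B : Matrix (Fin n) (Fin n) ℝ) (μ ν : Fin n → ℝ)
    (v w : Fin n → EuclideanSpace ℝ (Fin n)) (hv : Orthonormal ℝ v) (hw : Orthonormal ℝ w)
    (heigA : ∀ i, A.mulVec (v i) = μ i • v i) (heigB : ∀ i, B.mulVec (w i) = ν i • w i)
    (hμ : Antitone μ) (hν : Antitone ν) (k : Fin n) :
    μ k - ‖LinearMap.toContinuousLinearMap (Matrix.toEuclideanLin (B - A))‖ ≤ ν k := by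
  classical
  set T := ‖LinearMap.toContinuousLinearMap (Matrix.toEuclideanLin (B - A))‖ with hT
  set U := Submodule.span ℝ (Set.range fun i : ↥(Finset.Iic k) => v i) with hU
  set W := Submodule.span ℝ (Set.range fun i : ↥(Finset.Ici k) => w i) with hW
  have hdU : Module.finrank ℝ U = (k : ℕ) + 1 := by
    rw [hU, dk_finrank_span v hv]; exact Fin.card_Iic k
  have hdW : Module.finrank ℝ W = n - (k : ℕ) := by
    rw [hW, dk_finrank_span w hw]; exact Fin.card_Ici k
  have hsum := Submodule.finrank_sup_add_finrank_inf_eq U W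
  have hle : Module.finrank ℝ ↥(U ⊔ W) ≤ n := by
    have := Submodule.finrank_le (U ⊔ W)
    simpa using this
  have hklt : (k : ℕ) < n := k.isLt
  have hpos : 0 < Module.finrank ℝ ↥(U ⊓ W) := by omega
  have hne : U ⊓ W ≠ ⊥ := by
    intro h
    rw [h, finrank_bot] at hpos
    exact lt_irrefl 0 hpos
  obtain ⟨x, hx, hx0⟩ := Submodule.exists_mem_ne_zero_of_ne_bot hne
  obtain ⟨a, ha⟩ := Submodule.mem_span_range_iff_exists_fun ℝ |>.mp (hU ▸ hx.1)
  obtain ⟨b, hb⟩ := Submodule.mem_span_range_iff_exists_fun ℝ |>.mp (hW ▸ hx.2)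
  have hnorm : ⟪x, x⟫ = ‖x‖ ^ 2 := real_inner_self_eq_norm_sq x
  have hx2 : (0:ℝ) < ⟪x, x⟫ := by
    rw [hnorm]; exact pow_pos (norm_pos_iff.mpr hx0) 2
  have hxx_a : ⟪x, x⟫ = ∑ i : ↥(Finset.Iic k), a i * a i := by
    rw [← ha]; exact dk_inner_sum hv Subtype.val_injective a a
  have hxx_b : ⟪x, x⟫ = ∑ i : ↥(Finset.Ici k), b i * b i := by
    rw [← hb]; exact dk_inner_sum hw Subtype.val_injective b b
  have e1 : ⟪x, dkE (A.mulVec x)⟫ = ∑ i : ↥(Finset.Iic k), μ (↑i) * a i ^ 2 := by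
    rw [← ha, WithLp.ofLp_sum]; simp only [WithLp.ofLp_smul]; exact dk_quad_eq hv Subtype.val_injective heigA a
  have q1 : μ k * ⟪x, x⟫ ≤ ⟪x, dkE (A.mulVec x)⟫ := by
    rw [e1, hxx_a, Finset.mul_sum]
    refine Finset.sum_le_sum fun i _ => ?_
    have hik : μ k ≤ μ (↑i) := hμ (Finset.mem_Iic.mp i.2)
    nlinarith [sq_nonneg (a i)]
  have e2 : ⟪x, dkE (B.mulVec x)⟫ = ∑ i : ↥(Finset.Ici k), ν (↑i) * b i ^ 2 := by
    rw [← hb, WithLp.ofLp_sum]; simp only [WithLp.ofLp_smul]; exact dk_quad_eq hw Subtype.val_injective heigB b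
  have q2 : ⟪x, dkE (B.mulVec x)⟫ ≤ ν k * ⟪x, x⟫ := by
    rw [e2, hxx_b, Finset.mul_sum]
    refine Finset.sum_le_sum fun i _ => ?_
    have hik : ν (↑i) ≤ ν k := hν (Finset.mem_Ici.mp i.2)
    nlinarith [sq_nonneg (b i)]
  have q3 : ⟪x, dkE (B.mulVec x)⟫ = ⟪x, dkE (A.mulVec x)⟫ + ⟪x, dkE ((B - A).mulVec x)⟫ := by
    rw [← inner_add_right]
    congr 1
    show dkE (B.mulVec x) = dkE (A.mulVec x) + dkE ((B - A).mulVec x)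
    rw [Matrix.sub_mulVec]
    simp only [dkE, ← WithLp.toLp_add]
    congr 1
    abel
  have q4 : -(T * ‖x‖ ^ 2) ≤ ⟪x, dkE ((B - A).mulVec x)⟫ :=
    neg_le_of_abs_le (dk_opnorm (B - A) x)
  have key : (μ k - T) * ⟪x, x⟫ ≤ ν k * ⟪x, x⟫ := by
    have expand : (μ k - T) * ⟪x, x⟫ = μ k * ⟪x, x⟫ - T * ‖x‖ ^ 2 := by rw [hnorm]; ring
    linarith
  linarith [le_of_mul_le_mul_right key hx2]
end weyl

section main
open Finset in
set_option maxHeartbeats 1600000 in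
/-- Davis–Kahan sin Θ bound (Yu–Wang–Samworth variant) for the k-th eigenvector of a
    symmetric matrix H under a symmetric perturbation εM. -/
theorem davis_kahan_sin_theta (n : ℕ) (H M : Matrix (Fin n) (Fin n) ℝ)
    (hH : H.IsSymm) (hM : M.IsSymm) (ε : ℝ) (hε : 0 < ε)
    (lam : Fin n → ℝ) (hlam : Antitone lam)
    (v : Fin n → EuclideanSpace ℝ (Fin n)) (hv : Orthonormal ℝ v)
    (hveig : ∀ i, H.mulVec (v i) = lam i • (v i))
    (lamt : Fin n → ℝ) (hlamt : Antitone lamt)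
    (vt : Fin n → EuclideanSpace ℝ (Fin n)) (hvt : Orthonormal ℝ vt)
    (hvteig : ∀ i, (H + ε • M).mulVec (vt i) = lamt i • (vt i))
    (k : Fin n) (hk0 : 0 < (k : ℕ)) (hkn : (k : ℕ) + 1 < n)
    (hgap : 0 < min (lam ⟨(k : ℕ) - 1, by omega⟩ - lam k)
                    (lam k - lam ⟨(k : ℕ) + 1, hkn⟩)) :
    Real.sqrt (1 - ⟪v k, vt k⟫ ^ 2) ≤
      2 * ε * ‖LinearMap.toContinuousLinearMap (Matrix.toEuclideanLin M)‖ /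
        min (lam ⟨(k : ℕ) - 1, by omega⟩ - lam k)
            (lam k - lam ⟨(k : ℕ) + 1, hkn⟩) := by
  classical
  set N := ‖LinearMap.toContinuousLinearMap (Matrix.toEuclideanLin M)‖ with hN
  have hN0 : 0 ≤ N := norm_nonneg _
  set km : Fin n := ⟨(k : ℕ) - 1, by omega⟩ with hkm
  set kp : Fin n := ⟨(k : ℕ) + 1, hkn⟩ with hkp
  set δ := min (lam km - lam k) (lam k - lam kp) with hδ
  have hδ0 : 0 < δ := hgap
  -- Weyl inequalities
  have hnorm_smul : ‖LinearMap.toContinuousLinearMap (Matrix.toEuclideanLin (ε • M))‖ = ε * N := by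
    have h := norm_smul ε (LinearMap.toContinuousLinearMap (Matrix.toEuclideanLin M))
    rw [map_smul, map_smul, h, Real.norm_of_nonneg hε.le]
  have w1 : lam k - ε * N ≤ lamt k := by
    have := dk_weyl H (H + ε • M) lam lamt v vt hv hvt hveig hvteig hlam hlamt k
    rwa [show H + ε • M - H = ε • M by abel, hnorm_smul] at this
  have w2 : lamt k - ε * N ≤ lam k := by
    have := dk_weyl (H + ε • M) H lamt lam vt v hvt hv hvteig hveig hlamt hlam k
    rwa [show H - (H + ε • M) = -(ε • M) by abel, map_neg, map_neg, norm_neg,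
      hnorm_smul] at this
  -- orthonormal basis and Parseval
  have hsp : ⊤ ≤ Submodule.span ℝ (Set.range v) :=
    ge_of_eq (Submodule.eq_top_of_finrank_eq (by
      rw [finrank_span_eq_card hv.linearIndependent]; simp))
  have parseval : ∀ y : EuclideanSpace ℝ (Fin n),
      ∑ i, ⟪v i, y⟫ * ⟪v i, y⟫ = ⟪y, y⟫ := by
    intro y
    have h := (OrthonormalBasis.mk hv hsp).sum_inner_mul_inner y y
    simp only [OrthonormalBasis.coe_mk] at h
    rw [← h]
    exact Finset.sum_congr rfl fun i _ => by rw [real_inner_comm]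
  set x := vt k with hxdef
  have hxx : ⟪x, x⟫ = 1 := by
    rw [real_inner_self_eq_norm_sq, hvt.1 k]; norm_num
  set Mx := dkE (M.mulVec x) with hMxdef
  have hMx2 : ⟪Mx, Mx⟫ ≤ N ^ 2 := by
    rw [real_inner_self_eq_norm_sq]
    have h1 : ‖Mx‖ ≤ N * ‖x‖ := dk_norm_mulVec_le M x
    rw [hvt.1 k, mul_one] at h1
    exact pow_le_pow_left₀ (norm_nonneg _) h1 2
  have key : ∀ i, (lamt k - lam i) * ⟪v i, x⟫ = ε * ⟪v i, Mx⟫ := by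
    intro i
    have h1 : dkE ((H + ε • M).mulVec x) = lamt k • x := congrArg (WithLp.toLp 2) (hvteig k)
    have h2 : ⟪v i, dkE ((H + ε • M).mulVec x)⟫ = lamt k * ⟪v i, x⟫ := by
      rw [h1, real_inner_smul_right]
    have h3 : dkE ((H + ε • M).mulVec x) = dkE (H.mulVec x) + ε • Mx := by
      simp only [hMxdef, dkE, Matrix.add_mulVec, Matrix.smul_mulVec, WithLp.toLp_add,
        WithLp.toLp_smul]
    have h4 : ⟪v i, dkE (H.mulVec x)⟫ = lam i * ⟪v i, x⟫ := by
      rw [dk_mulVec_symm hH]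
      have h5 : dkE (H.mulVec (v i)) = lam i • v i := congrArg (WithLp.toLp 2) (hveig i)
      rw [h5, real_inner_smul_left]
    rw [h3, inner_add_right, real_inner_smul_right, h4] at h2
    linarith [h2]
  have sum1 : ∑ i, (lamt k - lam i) ^ 2 * ⟪v i, x⟫ ^ 2 ≤ ε ^ 2 * N ^ 2 := by
    have e : ∀ i : Fin n, (lamt k - lam i) ^ 2 * ⟪v i, x⟫ ^ 2
        = ε ^ 2 * (⟪v i, Mx⟫ * ⟪v i, Mx⟫) := by
      intro i
      calc (lamt k - lam i) ^ 2 * ⟪v i, x⟫ ^ 2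
          = ((lamt k - lam i) * ⟪v i, x⟫) ^ 2 := by ring
        _ = (ε * ⟪v i, Mx⟫) ^ 2 := by rw [key i]
        _ = ε ^ 2 * (⟪v i, Mx⟫ * ⟪v i, Mx⟫) := by ring
    rw [Finset.sum_congr rfl fun i _ => e i, ← Finset.mul_sum, parseval Mx]
    exact mul_le_mul_of_nonneg_left hMx2 (sq_nonneg ε)
  have hck : ⟪v k, x⟫ * ⟪v k, x⟫ + ∑ i ∈ Finset.univ.erase k, ⟪v i, x⟫ * ⟪v i, x⟫ = 1 := by
    have h := Finset.add_sum_erase Finset.univ (fun i => ⟪v i, x⟫ * ⟪v i, x⟫)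
      (Finset.mem_univ k)
    rw [h, parseval x, hxx]
  have main : Real.sqrt (1 - ⟪v k, x⟫ ^ 2) ≤ 2 * ε * N / δ := by
    rcases le_or_gt δ (2 * ε * N) with hcase | hcase
    · have h1 : Real.sqrt (1 - ⟪v k, x⟫ ^ 2) ≤ 1 :=
        Real.sqrt_le_one.mpr (by nlinarith [sq_nonneg ⟪v k, x⟫])
      have h2 : (1:ℝ) ≤ 2 * ε * N / δ := (one_le_div hδ0).mpr hcase
      exact h1.trans h2
    · have hδεN : 0 ≤ δ - ε * N := by nlinarith
      have gap2 : ∀ i, i ≠ k → (δ - ε * N) ^ 2 ≤ (lamt k - lam i) ^ 2 := by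
        intro i hi
        have hik : (i : ℕ) ≠ (k : ℕ) := fun h => hi (Fin.ext h)
        rcases hik.lt_or_gt with hik | hik
        · have hle : i ≤ km := by simp only [hkm, Fin.le_def]; omega
          have h5 : lam km ≤ lam i := hlam hle
          have h6 : δ ≤ lam km - lam k := min_le_left _ _
          have h7 : δ - ε * N ≤ lam i - lamt k := by linarith
          nlinarith
        · have hle : kp ≤ i := by simp only [hkp, Fin.le_def]; omega
          have h5 : lam i ≤ lam kp := hlam hle
          have h6 : δ ≤ lam k - lam kp := min_le_right _ _
          have h7 : δ - ε * N ≤ lamt k - lam i := by linarith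
          nlinarith
      have hsumnn : (0:ℝ) ≤ ∑ i ∈ Finset.univ.erase k, ⟪v i, x⟫ * ⟪v i, x⟫ :=
        Finset.sum_nonneg fun i _ => mul_self_nonneg _
      have hck2 : ⟪v k, x⟫ ^ 2 ≤ 1 := by nlinarith [hck]
      have sum2 : (δ - ε * N) ^ 2 * (1 - ⟪v k, x⟫ ^ 2) ≤ ε ^ 2 * N ^ 2 := by
        have h1 : 1 - ⟪v k, x⟫ ^ 2 = ∑ i ∈ Finset.univ.erase k, ⟪v i, x⟫ * ⟪v i, x⟫ := by
          rw [← hck]; ring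
        rw [h1, Finset.mul_sum]
        calc ∑ i ∈ Finset.univ.erase k, (δ - ε * N) ^ 2 * (⟪v i, x⟫ * ⟪v i, x⟫)
            ≤ ∑ i ∈ Finset.univ.erase k, (lamt k - lam i) ^ 2 * ⟪v i, x⟫ ^ 2 := by
              refine Finset.sum_le_sum fun i hi => ?_
              have hg := gap2 i (Finset.ne_of_mem_erase hi)
              nlinarith [mul_self_nonneg ⟪v i, x⟫]
          _ ≤ ∑ i, (lamt k - lam i) ^ 2 * ⟪v i, x⟫ ^ 2 :=
              Finset.sum_le_sum_of_subset_of_nonneg (Finset.subset_univ _)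
                fun i _ _ => by positivity
          _ ≤ ε ^ 2 * N ^ 2 := sum1
      have final2 : 1 - ⟪v k, x⟫ ^ 2 ≤ (2 * ε * N / δ) ^ 2 := by
        rw [div_pow, le_div_iff₀ (by positivity)]
        have t1 : (0:ℝ) ≤ (δ - 2 * ε * N) * (3 * δ - 2 * ε * N) := by nlinarith
        have t2 : δ ^ 2 * (1 - ⟪v k, x⟫ ^ 2) ≤ 4 * (δ - ε * N) ^ 2 * (1 - ⟪v k, x⟫ ^ 2) := by
          nlinarith [t1, hck2]
        nlinarith [sum2, t2]
      calc Real.sqrt (1 - ⟪v k, x⟫ ^ 2) ≤ Real.sqrt ((2 * ε * N / δ) ^ 2) :=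
            Real.sqrt_le_sqrt final2
        _ = 2 * ε * N / δ := Real.sqrt_sq (by positivity)
  exact main
end main
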